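/- Let V : [0,∞) → ℝ be a right-continuous function with left limits, of finite variation on every compact interval, with canonical decomposition V = V^c + V^d into its continuous part V^c and pure-jump part V^d. Let f : ℝ → ℝ be of class C¹. Then for every t > 0, f(V(t)) − f(V(0)) = ∫_0^t f'(V(s)) V^c(ds) + Σ_{0<s≤t} ( f(V(s)) − f(V(s−)) ), where the sum is absolutely convergent. -/

import Mathlib

open MeasureTheory Set Filter
open scoped ENNReal NNReal

noncomputable section

/-- The integral `∫_A f dμ` of `f` against a signed measure `μ`, defined through the
Jordan decomposition `μ = μ⁺ - μ⁻`. -/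
def signedIntegral {Ω : Type*} [MeasurableSpace Ω] (μ : MeasureTheory.SignedMeasure Ω)
    (A : Set Ω) (f : Ω → ℝ) : ℝ :=
  ∫ ω in A, f ω ∂μ.toJordanDecomposition.posPart -
    ∫ ω in A, f ω ∂μ.toJordanDecomposition.negPart

open scoped Topology

theorem sm_eval {Ω : Type*} [MeasurableSpace Ω] (μ : SignedMeasure Ω) (s : Set Ω) (hs : MeasurableSet s) :
    μ s = (μ.toJordanDecomposition.posPart s).toReal - (μ.toJordanDecomposition.negPart s).toReal := by
  conv_lhs => rw [← μ.toSignedMeasure_toJordanDecomposition]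
  rw [JordanDecomposition.toSignedMeasure]
  simp [hs, Measure.toSignedMeasure_apply_measurable]
  rfl

theorem mvt_helper (f : ℝ → ℝ) (hf : ContDiff ℝ 1 f) (y z : ℝ) :
    ∃ ξ ∈ Icc (min y z) (max y z), f z - f y = deriv f ξ * (z - y) := by
  have hd : ∀ u v : ℝ, u < v → ∃ c ∈ Ioo u v, deriv f c = (f v - f u) / (v - u) :=
    fun u v h => exists_deriv_eq_slope f h hf.continuous.continuousOn
      (fun x _ => ((hf.differentiable one_ne_zero) x).differentiableWithinAt)
  rcases lt_trichotomy y z with h | h | h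
  · obtain ⟨c, hc, hc2⟩ := hd y z h
    refine ⟨c, ⟨?_, ?_⟩, ?_⟩
    · rw [min_eq_left h.le]; exact hc.1.le
    · rw [max_eq_right h.le]; exact hc.2.le
    · rw [hc2, div_mul_eq_mul_div, mul_div_assoc, div_self (by linarith : z - y ≠ 0), mul_one]
  · exact ⟨y, by simp [h], by simp [h]⟩
  · obtain ⟨c, hc, hc2⟩ := hd z y h
    refine ⟨c, ⟨?_, ?_⟩, ?_⟩
    · rw [min_eq_right h.le]; exact hc.1.le
    · rw [max_eq_left h.le]; exact hc.2.le
    · rw [hc2]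
      rw [div_mul_eq_mul_div, eq_div_iff (by linarith : y - z ≠ 0)]
      ring

theorem integral_Ioc_partition (ρ : Measure ℝ) [IsFiniteMeasure ρ] (h : ℝ → ℝ) (x : ℕ → ℝ)
    (hm : Monotone x) (m : ℕ) (hint : IntegrableOn h (Ioc (x 0) (x m)) ρ) :
    ∫ s in Ioc (x 0) (x m), h s ∂ρ
      = ∑ i ∈ Finset.range m, ∫ s in Ioc (x i) (x (i+1)), h s ∂ρ := by
  induction m with
  | zero => simp
  | succ m ih =>
    have h1 : x 0 ≤ x m := hm (Nat.zero_le m)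
    have h2 : x m ≤ x (m+1) := hm (Nat.le_succ m)
    have hun : Ioc (x 0) (x m) ∪ Ioc (x m) (x (m+1)) = Ioc (x 0) (x (m+1)) :=
      Set.Ioc_union_Ioc_eq_Ioc h1 h2
    have hsub1 : Ioc (x 0) (x m) ⊆ Ioc (x 0) (x (m+1)) := by rw [← hun]; exact subset_union_left
    have hsub2 : Ioc (x m) (x (m+1)) ⊆ Ioc (x 0) (x (m+1)) := by rw [← hun]; exact subset_union_right
    rw [← hun, setIntegral_union ((Set.Ioc_disjoint_Ioc_of_le le_rfl)) measurableSet_Ioc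
      (hint.mono_set hsub1) (hint.mono_set hsub2),
      ih (hint.mono_set hsub1), Finset.sum_range_succ]

theorem measure_Ioc_partition (ρ : Measure ℝ) [IsFiniteMeasure ρ] (x : ℕ → ℝ)
    (hm : Monotone x) (m : ℕ) :
    (ρ (Ioc (x 0) (x m))).toReal
      = ∑ i ∈ Finset.range m, (ρ (Ioc (x i) (x (i+1)))).toReal := by
  have := integral_Ioc_partition ρ (fun _ => (1:ℝ)) x hm m (integrable_const 1).integrableOn
  simpa [measureReal_def] using this

theorem lemA (t : ℝ) (Vc : ℝ → ℝ) (hVc_cont : ContinuousOn Vc (Set.Ici 0))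
    (μc : MeasureTheory.SignedMeasure ℝ)
    (hμc : ∀ a b : ℝ, 0 ≤ a → a ≤ b → b ≤ t → μc (Set.Ioc a b) = Vc b - Vc a)
    (f : ℝ → ℝ) (hf : ContDiff ℝ 1 f)
    (C a b : ℝ) (h0a : 0 ≤ a) (hab : a ≤ b) (hbt : b ≤ t) :
    f (Vc b + C) - f (Vc a + C)
      = signedIntegral μc (Set.Ioc a b) (fun s => deriv f (Vc s + C)) := by
  set P := μc.toJordanDecomposition.posPart with hPdef
  set N := μc.toJordanDecomposition.negPart with hNdef
  set g : ℝ → ℝ := fun s => Vc s + C with hgdef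
  set h : ℝ → ℝ := fun s => deriv f (g s) with hhdef
  have hIccIci : Icc a b ⊆ Ici (0:ℝ) := fun s hs => le_trans h0a hs.1
  have hg_cont : ContinuousOn g (Icc a b) := ((hVc_cont.mono hIccIci).add continuousOn_const)
  obtain ⟨R, hR⟩ : ∃ R, ∀ s ∈ Icc a b, |g s| ≤ R := by
    obtain ⟨R, hR⟩ := isCompact_Icc.exists_bound_of_continuousOn hg_cont
    exact ⟨R, fun s hs => hR s hs⟩
  have hf' : Continuous (deriv f) := hf.continuous_deriv le_rfl
  have hh_cont : ContinuousOn h (Icc a b) := hf'.comp_continuousOn hg_cont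
  obtain ⟨M, hM⟩ : ∃ M, ∀ y ∈ Icc (-R) R, |deriv f y| ≤ M := by
    obtain ⟨M, hM⟩ := isCompact_Icc.exists_bound_of_continuousOn
      (hf'.continuousOn (s := Icc (-R) R))
    exact ⟨M, fun y hy => hM y hy⟩
  have hgmem : ∀ s ∈ Icc a b, g s ∈ Icc (-R) R := by
    intro s hs
    have := hR s hs
    rw [abs_le] at this
    exact this
  have hint : ∀ (ρ : Measure ℝ) [IsFiniteMeasure ρ], IntegrableOn h (Ioc a b) ρ := by
    intro ρ _
    have hmeas : AEStronglyMeasurable h (ρ.restrict (Ioc a b)) :=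
      ((hh_cont.mono Ioc_subset_Icc_self).aemeasurable measurableSet_Ioc).aestronglyMeasurable
    refine Integrable.mono' (integrable_const M) hmeas ?_
    refine (ae_restrict_iff' measurableSet_Ioc).2 (Eventually.of_forall fun s hs => ?_)
    have := hM _ (hgmem s (Ioc_subset_Icc_self hs))
    simpa [Real.norm_eq_abs] using this
  -- main estimate
  set X := f (Vc b + C) - f (Vc a + C) - signedIntegral μc (Set.Ioc a b) h with hXdef
  set c0 := (P (Ioc a b)).toReal + (N (Ioc a b)).toReal with hc0def
  have hc0 : 0 ≤ c0 := by positivity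
  suffices hmain : ∀ ε : ℝ, 0 < ε → |X| ≤ ε * c0 by
    have hX0 : X = 0 := by
      by_contra hX
      have h1 : 0 < |X| := abs_pos.2 hX
      have h2 := hmain (|X| / (2 * (c0 + 1))) (by positivity)
      have hpos : (0:ℝ) < 2 * (c0 + 1) := by positivity
      rw [div_mul_eq_mul_div, le_div_iff₀ hpos] at h2
      nlinarith [h1, hc0, mul_nonneg h1.le hc0]
    have : f (Vc b + C) - f (Vc a + C) - signedIntegral μc (Set.Ioc a b) h = 0 := hX0
    linarith
  intro ε hε
  -- uniform continuity
  have hucf : UniformContinuousOn (deriv f) (Icc (-R) R) :=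
    isCompact_Icc.uniformContinuousOn_of_continuous hf'.continuousOn
  rw [Metric.uniformContinuousOn_iff] at hucf
  obtain ⟨δ₁, hδ₁pos, hδ₁⟩ := hucf ε hε
  have hucg : UniformContinuousOn g (Icc a b) :=
    isCompact_Icc.uniformContinuousOn_of_continuous hg_cont
  rw [Metric.uniformContinuousOn_iff] at hucg
  obtain ⟨δ₂, hδ₂pos, hδ₂⟩ := hucg δ₁ hδ₁pos
  obtain ⟨n, hn⟩ := exists_nat_gt ((b - a) / δ₂)
  set m := n + 1 with hmdef
  have hmpos : (0:ℝ) < m := by positivity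
  have hq : 0 ≤ (b - a) / m := by
    apply div_nonneg (by linarith) hmpos.le
  have hmesh : (b - a) / m < δ₂ := by
    rw [div_lt_iff₀ hmpos]
    have h1 : b - a < n * δ₂ := by
      have := (div_lt_iff₀ hδ₂pos).1 hn
      linarith
    have : (n:ℝ) ≤ m := by
      rw [hmdef]; push_cast; linarith
    nlinarith
  set x : ℕ → ℝ := fun i => a + i * ((b - a) / m) with hxdef
  have hx0 : x 0 = a := by simp [hxdef]
  have hxm : x m = b := by
    simp only [hxdef]
    field_simp
    ring
  have hxmono : Monotone x := by
    intro i j hij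
    simp only [hxdef]
    have : (i:ℝ) ≤ j := by exact_mod_cast hij
    nlinarith
  have hxmem : ∀ i, i ≤ m → x i ∈ Icc a b := by
    intro i hi
    constructor
    · simp only [hxdef]; nlinarith [Nat.cast_nonneg (α := ℝ) i]
    · rw [← hxm]; exact hxmono hi
  have hstep : ∀ i : ℕ, x (i+1) - x i = (b - a) / m := by
    intro i; simp only [hxdef]; push_cast; ring
  clear_value x m
  -- MVT choices
  have hmvt : ∀ i : ℕ, ∃ ξ ∈ Icc (min (g (x i)) (g (x (i+1)))) (max (g (x i)) (g (x (i+1)))),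
      f (g (x (i+1))) - f (g (x i)) = deriv f ξ * (g (x (i+1)) - g (x i)) :=
    fun i => mvt_helper f hf _ _
  choose ξ hξmem hξeq using hmvt
  -- telescoping
  have htel : f (Vc b + C) - f (Vc a + C)
      = ∑ i ∈ Finset.range m, (f (g (x (i+1))) - f (g (x i))) := by
    rw [Finset.sum_range_sub (fun i => f (g (x i))) m, hx0, hxm]
  -- integral splitting
  have hsplit : signedIntegral μc (Set.Ioc a b) h
      = ∑ i ∈ Finset.range m, signedIntegral μc (Set.Ioc (x i) (x (i+1))) h := by
    simp only [signedIntegral]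
    have e1 : Ioc a b = Ioc (x 0) (x m) := by rw [hx0, hxm]
    rw [e1, integral_Ioc_partition P h x hxmono m (by rw [← e1]; exact hint P),
      integral_Ioc_partition N h x hxmono m (by rw [← e1]; exact hint N),
      ← Finset.sum_sub_distrib]
  -- per-interval bound
  have hterm : ∀ i ∈ Finset.range m,
      |(f (g (x (i+1))) - f (g (x i))) - signedIntegral μc (Set.Ioc (x i) (x (i+1))) h|
        ≤ ε * ((P (Ioc (x i) (x (i+1)))).toReal + (N (Ioc (x i) (x (i+1)))).toReal) := by
    intro i hi
    rw [Finset.mem_range] at hi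
    have hi1 : i + 1 ≤ m := hi
    have hximem : x i ∈ Icc a b := hxmem i (le_of_lt hi)
    have hxi1mem : x (i+1) ∈ Icc a b := hxmem (i+1) hi1
    have hxle : x i ≤ x (i+1) := hxmono (Nat.le_succ i)
    set I := Ioc (x i) (x (i+1)) with hIdef
    -- signed measure value
    have hval : μc I = Vc (x (i+1)) - Vc (x i) :=
      hμc _ _ (le_trans h0a hximem.1) hxle (le_trans hxi1mem.2 hbt)
    have heval : (P I).toReal - (N I).toReal = Vc (x (i+1)) - Vc (x i) := by
      rw [← hval]; exact (sm_eval μc I measurableSet_Ioc).symm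
    have hgdiff : g (x (i+1)) - g (x i) = (P I).toReal - (N I).toReal := by
      simp only [hgdef]; rw [heval]; ring
    -- pointwise bound on I
    have hpw : ∀ s ∈ I, ‖deriv f (ξ i) - h s‖ ≤ ε := by
      intro s hs
      rw [hIdef, Set.mem_Ioc] at hs
      obtain ⟨hs1, hs2⟩ := hs
      have hsmem : s ∈ Icc a b := ⟨le_trans hximem.1 (le_of_lt hs1), le_trans hs2 hxi1mem.2⟩
      have hgs : g s ∈ Icc (-R) R := hgmem s hsmem
      have hq1 : x (i+1) - x i = (b - a) / (m:ℝ) := hstep i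
      have hq2 : (b - a) / (m:ℝ) < δ₂ := hmesh
      have hd1 : dist (x i) s < δ₂ := by
        rw [Real.dist_eq, abs_lt]
        constructor <;> linarith
      have hd2 : dist (x (i+1)) s < δ₂ := by
        rw [Real.dist_eq, abs_lt]
        constructor <;> linarith
      have hgd1 : dist (g (x i)) (g s) < δ₁ := hδ₂ _ hximem _ hsmem hd1
      have hgd2 : dist (g (x (i+1))) (g s) < δ₁ := hδ₂ _ hxi1mem _ hsmem hd2
      have hξI : ξ i ∈ Icc (-R) R := by
        obtain ⟨hl, hr⟩ := hξmem i
        have h1 := hgmem _ hximem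
        have h2 := hgmem _ hxi1mem
        constructor
        · exact le_trans (le_min h1.1 h2.1) hl
        · exact le_trans hr (max_le h1.2 h2.2)
      have hξd : dist (ξ i) (g s) < δ₁ := by
        obtain ⟨hl, hr⟩ := hξmem i
        rw [Real.dist_eq, abs_lt] at hgd1 hgd2 ⊢
        have hmaxlt : max (g (x i)) (g (x (i+1))) - g s < δ₁ := by
          rcases max_cases (g (x i)) (g (x (i+1))) with ⟨he, _⟩ | ⟨he, _⟩ <;> rw [he] <;> linarith
        have hminlt : -δ₁ < min (g (x i)) (g (x (i+1))) - g s := by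
          rcases min_cases (g (x i)) (g (x (i+1))) with ⟨he, _⟩ | ⟨he, _⟩ <;> rw [he] <;> linarith
        constructor <;> linarith
      have := hδ₁ _ hξI _ hgs hξd
      rw [Real.dist_eq] at this
      simpa [Real.norm_eq_abs, hhdef] using this.le
    -- integral manipulations
    have hintP : IntegrableOn h I P := (hint P).mono_set (Set.Ioc_subset_Ioc hximem.1 hxi1mem.2)
    have hintN : IntegrableOn h I N := (hint N).mono_set (Set.Ioc_subset_Ioc hximem.1 hxi1mem.2)
    have hconst : ∀ (ρ : Measure ℝ) [IsFiniteMeasure ρ],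
        ∫ s in I, (fun _ => deriv f (ξ i)) s ∂ρ = (ρ I).toReal * deriv f (ξ i) := by
      intro ρ _
      rw [setIntegral_const, smul_eq_mul]
      rfl
    have key : (f (g (x (i+1))) - f (g (x i))) - signedIntegral μc I h
        = (∫ s in I, (deriv f (ξ i) - h s) ∂P) - (∫ s in I, (deriv f (ξ i) - h s) ∂N) := by
      rw [integral_sub (integrable_const _).integrableOn hintP,
        integral_sub (integrable_const _).integrableOn hintN]
      rw [signedIntegral, hξeq i, hgdiff]
      rw [setIntegral_const, setIntegral_const, smul_eq_mul, smul_eq_mul]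
      simp only [measureReal_def]
      ring
    rw [key]
    have hb1 : ‖∫ s in I, (deriv f (ξ i) - h s) ∂P‖ ≤ ε * (P I).toReal :=
      norm_setIntegral_le_of_norm_le_const (measure_lt_top _ _) hpw
    have hb2 : ‖∫ s in I, (deriv f (ξ i) - h s) ∂N‖ ≤ ε * (N I).toReal :=
      norm_setIntegral_le_of_norm_le_const (measure_lt_top _ _) hpw
    rw [Real.norm_eq_abs] at hb1 hb2
    calc |(∫ s in I, (deriv f (ξ i) - h s) ∂P) - (∫ s in I, (deriv f (ξ i) - h s) ∂N)|
        ≤ |∫ s in I, (deriv f (ξ i) - h s) ∂P| + |∫ s in I, (deriv f (ξ i) - h s) ∂N| := abs_sub _ _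
      _ ≤ ε * (P I).toReal + ε * (N I).toReal := add_le_add hb1 hb2
      _ = ε * ((P I).toReal + (N I).toReal) := by ring
  -- combine
  have hPsum : (P (Ioc a b)).toReal = ∑ i ∈ Finset.range m, (P (Ioc (x i) (x (i+1)))).toReal := by
    have := measure_Ioc_partition P x hxmono m
    rw [hx0, hxm] at this; exact this
  have hNsum : (N (Ioc a b)).toReal = ∑ i ∈ Finset.range m, (N (Ioc (x i) (x (i+1)))).toReal := by
    have := measure_Ioc_partition N x hxmono m
    rw [hx0, hxm] at this; exact this
  rw [hXdef, htel, hsplit, ← Finset.sum_sub_distrib]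
  calc |∑ i ∈ Finset.range m, ((f (g (x (i+1))) - f (g (x i))) - signedIntegral μc (Set.Ioc (x i) (x (i+1))) h)|
      ≤ ∑ i ∈ Finset.range m, |(f (g (x (i+1))) - f (g (x i))) - signedIntegral μc (Set.Ioc (x i) (x (i+1))) h| :=
        Finset.abs_sum_le_sum_abs _ _
    _ ≤ ∑ i ∈ Finset.range m, ε * ((P (Ioc (x i) (x (i+1)))).toReal + (N (Ioc (x i) (x (i+1)))).toReal) :=
        Finset.sum_le_sum hterm
    _ = ε * c0 := by
        rw [hc0def, hPsum, hNsum, ← Finset.mul_sum, ← Finset.sum_add_distrib]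

theorem point_null (t : ℝ) (Vc : ℝ → ℝ) (hVc_cont : ContinuousOn Vc (Set.Ici 0))
    (μc : MeasureTheory.SignedMeasure ℝ)
    (hμc : ∀ a b : ℝ, 0 ≤ a → a ≤ b → b ≤ t → μc (Set.Ioc a b) = Vc b - Vc a)
    (x : ℝ) (hx : x ∈ Set.Ioc (0:ℝ) t) :
    μc.toJordanDecomposition.posPart {x} = 0 ∧ μc.toJordanDecomposition.negPart {x} = 0 := by
  set P := μc.toJordanDecomposition.posPart with hP
  set N := μc.toJordanDecomposition.negPart with hN
  -- the intersection of the Ioc's is {x}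
  have hseq : Tendsto (fun n : ℕ => x - 1/(n+1)) atTop (𝓝 x) := by
    have : Tendsto (fun n : ℕ => 1/((n:ℝ)+1)) atTop (𝓝 0) := tendsto_one_div_add_atTop_nhds_zero_nat
    simpa using (tendsto_const_nhds (x := x)).sub this
  have hIcap : ⋂ n : ℕ, Ioc (x - 1/(n+1)) x = {x} := by
    ext y
    simp only [mem_iInter, mem_Ioc, mem_singleton_iff]
    constructor
    · intro h
      refine le_antisymm (h 0).2 ?_
      by_contra hxy
      push_neg at hxy
      obtain ⟨n, hn⟩ := exists_nat_one_div_lt (show 0 < x - y by linarith)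
      have := (h n).1
      rw [one_div] at hn
      rw [one_div] at this
      linarith
    · rintro rfl
      refine fun n => ⟨by simp; positivity, le_rfl⟩
  have hanti : Antitone fun n : ℕ => Ioc (x - 1/(n+1)) x := by
    intro a b hab
    apply Set.Ioc_subset_Ioc_left
    have : 1/((b:ℝ)+1) ≤ 1/((a:ℝ)+1) := by
      apply one_div_le_one_div_of_le (by positivity)
      have := (Nat.cast_le (α := ℝ)).mpr hab; linarith
    linarith
  have hPlim : Tendsto (fun n : ℕ => P (Ioc (x - 1/(n+1)) x)) atTop (𝓝 (P {x})) := by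
    rw [← hIcap]
    exact tendsto_measure_iInter_atTop (fun n => measurableSet_Ioc.nullMeasurableSet) hanti ⟨0, measure_ne_top _ _⟩
  have hNlim : Tendsto (fun n : ℕ => N (Ioc (x - 1/(n+1)) x)) atTop (𝓝 (N {x})) := by
    rw [← hIcap]
    exact tendsto_measure_iInter_atTop (fun n => measurableSet_Ioc.nullMeasurableSet) hanti ⟨0, measure_ne_top _ _⟩
  -- real-valued limits
  have hPlim' : Tendsto (fun n : ℕ => (P (Ioc (x - 1/(n+1)) x)).toReal) atTop (𝓝 ((P {x}).toReal)) :=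
    (ENNReal.tendsto_toReal (measure_ne_top _ _)).comp hPlim
  have hNlim' : Tendsto (fun n : ℕ => (N (Ioc (x - 1/(n+1)) x)).toReal) atTop (𝓝 ((N {x}).toReal)) :=
    (ENNReal.tendsto_toReal (measure_ne_top _ _)).comp hNlim
  -- the signed measure of the Ioc's tends to 0
  have hVclim : Tendsto (fun n : ℕ => Vc x - Vc (x - 1/(n+1))) atTop (𝓝 0) := by
    have hmem : ∀ᶠ n : ℕ in atTop, x - 1/(n+1) ∈ Set.Ici (0:ℝ) := by
      obtain ⟨n0, hn0⟩ := exists_nat_one_div_lt hx.1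
      filter_upwards [eventually_ge_atTop n0] with n hn
      have h1 : 1/((n:ℝ)+1) ≤ 1/((n0:ℝ)+1) := by
        apply one_div_le_one_div_of_le (by positivity)
        have := (Nat.cast_le (α := ℝ)).mpr hn; linarith
      rw [one_div, one_div] at h1
      rw [one_div] at hn0
      simp only [mem_Ici, sub_nonneg, one_div]
      linarith
    have hc : Tendsto (fun n : ℕ => Vc (x - 1/(n+1))) atTop (𝓝 (Vc x)) := by
      have := (hVc_cont x (le_of_lt hx.1)).tendsto
      exact this.comp (tendsto_nhdsWithin_iff.2 ⟨hseq, hmem⟩)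
    simpa using (tendsto_const_nhds (x := Vc x)).sub hc
  have heq : ∀ᶠ n : ℕ in atTop, Vc x - Vc (x - 1/(n+1))
      = (P (Ioc (x - 1/(n+1)) x)).toReal - (N (Ioc (x - 1/(n+1)) x)).toReal := by
    obtain ⟨n0, hn0⟩ := exists_nat_one_div_lt hx.1
    filter_upwards [eventually_ge_atTop n0] with n hn
    have h1 : 1/((n:ℝ)+1) ≤ 1/((n0:ℝ)+1) := by
      apply one_div_le_one_div_of_le (by positivity)
      have := (Nat.cast_le (α := ℝ)).mpr hn; linarith
    rw [one_div, one_div] at h1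
    rw [one_div] at hn0
    have h0 : (0:ℝ) ≤ x - 1/(n+1) := by rw [one_div]; linarith
    have h0' : x - 1/(n+1) ≤ x := by
      have : (0:ℝ) < 1/((n:ℝ)+1) := by positivity
      linarith
    rw [← hμc _ _ h0 h0' hx.2]
    exact sm_eval μc _ measurableSet_Ioc
  have hzero : (P {x}).toReal - (N {x}).toReal = 0 := by
    have := (hPlim'.sub hNlim')
    have h2 : Tendsto (fun n : ℕ => Vc x - Vc (x - 1/(n+1))) atTop
        (𝓝 ((P {x}).toReal - (N {x}).toReal)) := this.congr' (heq.mono fun n h => h.symm)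
    exact tendsto_nhds_unique h2 hVclim
  -- mutual singularity
  obtain ⟨S, hSm, hPS, hNS⟩ := μc.toJordanDecomposition.mutuallySingular
  have key : P {x} = 0 ∨ N {x} = 0 := by
    by_cases hxS : x ∈ S
    · left
      exact le_antisymm (le_trans (measure_mono (by simpa using hxS)) (le_of_eq hPS)) zero_le
    · right
      exact le_antisymm (le_trans (measure_mono (by simpa using hxS)) (le_of_eq hNS)) zero_le
  rcases key with h | h
  · refine ⟨h, ?_⟩
    rw [h] at hzero
    simp only [ENNReal.toReal_zero, zero_sub, neg_eq_zero] at hzero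
    exact (ENNReal.toReal_eq_zero_iff _).1 hzero |>.resolve_right (measure_ne_top _ _)
  · refine ⟨?_, h⟩
    rw [h] at hzero
    simp only [ENNReal.toReal_zero, sub_zero] at hzero
    exact (ENNReal.toReal_eq_zero_iff _).1 hzero |>.resolve_right (measure_ne_top _ _)

def Wfun (Vc Δ : ℝ → ℝ) (F : Finset ℝ) (s : ℝ) : ℝ :=
  Vc s + ∑ v ∈ F.filter (fun v => v ≤ s), Δ v

theorem Wfun_aemeas (Vc Δ : ℝ → ℝ) (hVc_cont : ContinuousOn Vc (Set.Ici 0))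
    (F : Finset ℝ) (A : Set ℝ) (hA : MeasurableSet A) (hA0 : A ⊆ Set.Ici 0)
    (f : ℝ → ℝ) (hf : ContDiff ℝ 1 f) (ρ : Measure ℝ) :
    AEStronglyMeasurable (fun s => deriv f (Wfun Vc Δ F s)) (ρ.restrict A) := by
  have hstep : Measurable (fun s : ℝ => ∑ v ∈ F.filter (fun v => v ≤ s), Δ v) := by
    have : (fun s : ℝ => ∑ v ∈ F.filter (fun v => v ≤ s), Δ v)
        = fun s : ℝ => ∑ v ∈ F, if v ≤ s then Δ v else 0 := by
      funext s
      rw [Finset.sum_filter]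
    rw [this]
    refine Finset.measurable_sum F fun v _ => ?_
    exact Measurable.ite (measurableSet_Ici (a := v)) measurable_const measurable_const
  have hW : AEMeasurable (Wfun Vc Δ F) (ρ.restrict A) := by
    refine AEMeasurable.add ?_ hstep.aemeasurable
    exact ((hVc_cont.mono hA0).aemeasurable hA)
  exact (((hf.continuous_deriv le_rfl).measurable).comp_aemeasurable hW).aestronglyMeasurable

theorem Wfun_integrableOn (t : ℝ) (Vc Δ : ℝ → ℝ) (hVc_cont : ContinuousOn Vc (Set.Ici 0))
    (F : Finset ℝ) (b : ℝ) (hb0 : 0 ≤ b) (hbt : b ≤ t)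
    (f : ℝ → ℝ) (hf : ContDiff ℝ 1 f) (ρ : Measure ℝ) [IsFiniteMeasure ρ] :
    IntegrableOn (fun s => deriv f (Wfun Vc Δ F s)) (Set.Ioc 0 b) ρ := by
  obtain ⟨R0, hR0⟩ : ∃ R0, ∀ s ∈ Icc (0:ℝ) t, |Vc s| ≤ R0 := by
    obtain ⟨R0, hR0⟩ := isCompact_Icc.exists_bound_of_continuousOn
      (hVc_cont.mono (Icc_subset_Ici_self : Icc (0:ℝ) t ⊆ Ici 0))
    exact ⟨R0, fun s hs => hR0 s hs⟩
  set RW := R0 + ∑ v ∈ F, |Δ v| with hRWdef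
  have hWb : ∀ s ∈ Set.Ioc (0:ℝ) b, |Wfun Vc Δ F s| ≤ RW := by
    intro s hs
    have hs' : s ∈ Icc (0:ℝ) t := ⟨hs.1.le, hs.2.trans hbt⟩
    have h1 := hR0 s hs'
    have h2 : |∑ v ∈ F.filter (fun v => v ≤ s), Δ v| ≤ ∑ v ∈ F, |Δ v| := by
      refine le_trans (Finset.abs_sum_le_sum_abs _ _) ?_
      exact Finset.sum_le_sum_of_subset_of_nonneg (Finset.filter_subset _ _)
        (fun v _ _ => abs_nonneg _)
    calc |Wfun Vc Δ F s| ≤ |Vc s| + |∑ v ∈ F.filter (fun v => v ≤ s), Δ v| := abs_add_le _ _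
      _ ≤ RW := by rw [hRWdef]; linarith
  obtain ⟨MW, hMW⟩ : ∃ MW, ∀ y ∈ Icc (-RW) RW, |deriv f y| ≤ MW := by
    obtain ⟨MW, hMW⟩ := isCompact_Icc.exists_bound_of_continuousOn
      ((hf.continuous_deriv le_rfl).continuousOn (s := Icc (-RW) RW))
    exact ⟨MW, fun y hy => hMW y hy⟩
  refine Integrable.mono' (integrable_const MW)
    (Wfun_aemeas Vc Δ hVc_cont F _ measurableSet_Ioc
      (fun s hs => hs.1.le) f hf ρ) ?_
  refine (ae_restrict_iff' measurableSet_Ioc).2 (Eventually.of_forall fun s hs => ?_)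
  have := hMW _ (abs_le.1 (hWb s hs))
  simpa [Real.norm_eq_abs] using this

theorem lemB (t : ℝ) (Vc : ℝ → ℝ) (hVc_cont : ContinuousOn Vc (Set.Ici 0))
    (μc : MeasureTheory.SignedMeasure ℝ)
    (hμc : ∀ a b : ℝ, 0 ≤ a → a ≤ b → b ≤ t → μc (Set.Ioc a b) = Vc b - Vc a)
    (f : ℝ → ℝ) (hf : ContDiff ℝ 1 f) (Δ : ℝ → ℝ)
    (F : Finset ℝ) (b : ℝ) (hF : ∀ u ∈ F, u ∈ Set.Ioc (0:ℝ) b) (hb0 : 0 ≤ b) (hbt : b ≤ t) :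
    f (Wfun Vc Δ F b) - f (Vc 0)
      = signedIntegral μc (Set.Ioc 0 b) (fun s => deriv f (Wfun Vc Δ F s))
        + ∑ u ∈ F, (f (Wfun Vc Δ F u) - f (Wfun Vc Δ F u - Δ u)) := by
  induction F using Finset.strongInductionOn generalizing b with
  | _ F ih =>
  rcases F.eq_empty_or_nonempty with rfl | hne
  · have hW : ∀ s, Wfun Vc Δ ∅ s = Vc s + 0 := by
      intro s; simp [Wfun]
    have hA := lemA t Vc hVc_cont μc hμc f hf 0 0 b le_rfl hb0 hbt
    simp only [hW]
    simp only [add_zero] at hA ⊢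
    rw [hA]
    simp
  · set P := μc.toJordanDecomposition.posPart with hPdef
    set N := μc.toJordanDecomposition.negPart with hNdef
    set m := F.max' hne with hmdef
    have hmF : m ∈ F := F.max'_mem hne
    have hm : m ∈ Set.Ioc (0:ℝ) b := hF m hmF
    have hmt : m ∈ Set.Ioc (0:ℝ) t := ⟨hm.1, hm.2.trans hbt⟩
    set F' := F.erase m with hF'def
    have hsub : F' ⊂ F := Finset.erase_ssubset hmF
    have hF'sub : F' ⊆ F := Finset.erase_subset _ _
    have hF' : ∀ u ∈ F', u ∈ Set.Ioc (0:ℝ) m := by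
      intro u hu
      exact ⟨(hF u (hF'sub hu)).1, F.le_max' u (hF'sub hu)⟩
    have IH := ih F' hsub m hF' hm.1.le (hm.2.trans hbt)
    -- filter facts
    have k1 : ∀ s, m ≤ s → F.filter (fun v => v ≤ s) = F := by
      intro s hms
      exact Finset.filter_true_of_mem (fun v hv => le_trans (F.le_max' v hv) hms)
    have k2 : ∀ s, s < m → F.filter (fun v => v ≤ s) = F'.filter (fun v => v ≤ s) := by
      intro s hsm
      ext u
      simp only [Finset.mem_filter, hF'def, Finset.mem_erase]
      constructor
      · rintro ⟨h1, h2⟩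
        exact ⟨⟨fun he => absurd h2 (by rw [he]; exact not_le.2 hsm), h1⟩, h2⟩
      · rintro ⟨⟨_, h1⟩, h2⟩
        exact ⟨h1, h2⟩
    have k3 : ∀ s, s < m → Wfun Vc Δ F s = Wfun Vc Δ F' s := by
      intro s hsm
      simp only [Wfun]
      rw [k2 s hsm]
    have k4 : ∀ s, m ≤ s → Wfun Vc Δ F s = Vc s + ∑ u ∈ F, Δ u := by
      intro s hms
      simp only [Wfun]
      rw [k1 s hms]
    have k5 : Wfun Vc Δ F m - Δ m = Wfun Vc Δ F' m := by
      have h1 := k4 m le_rfl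
      have h2 : Wfun Vc Δ F' m = Vc m + ∑ u ∈ F', Δ u := by
        simp only [Wfun]
        rw [Finset.filter_true_of_mem (fun v hv => (hF' v hv).2)]
      have h3 : Δ m + ∑ u ∈ F', Δ u = ∑ u ∈ F, Δ u := Finset.add_sum_erase F Δ hmF
      rw [h1, h2, ← h3]
      ring
    -- integrability
    have hintF : ∀ (ρ : Measure ℝ) [IsFiniteMeasure ρ],
        IntegrableOn (fun s => deriv f (Wfun Vc Δ F s)) (Set.Ioc 0 b) ρ :=
      fun ρ _ => Wfun_integrableOn t Vc Δ hVc_cont F b hb0 hbt f hf ρ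
    -- splitting of the integral
    have e0 : Set.Ioc (0:ℝ) m ∪ Set.Ioc m b = Set.Ioc (0:ℝ) b := Set.Ioc_union_Ioc_eq_Ioc hm.1.le hm.2
    have hsub1 : Set.Ioc (0:ℝ) m ⊆ Set.Ioc (0:ℝ) b := by rw [← e0]; exact subset_union_left
    have hsub2 : Set.Ioc m b ⊆ Set.Ioc (0:ℝ) b := by rw [← e0]; exact subset_union_right
    have hsplit : signedIntegral μc (Set.Ioc 0 b) (fun s => deriv f (Wfun Vc Δ F s))
        = signedIntegral μc (Set.Ioc 0 m) (fun s => deriv f (Wfun Vc Δ F s))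
          + signedIntegral μc (Set.Ioc m b) (fun s => deriv f (Wfun Vc Δ F s)) := by
      simp only [signedIntegral]
      rw [← e0, setIntegral_union (Set.Ioc_disjoint_Ioc_of_le le_rfl) measurableSet_Ioc
        ((hintF P).mono_set hsub1) ((hintF P).mono_set hsub2),
        setIntegral_union (Set.Ioc_disjoint_Ioc_of_le le_rfl) measurableSet_Ioc
        ((hintF N).mono_set hsub1) ((hintF N).mono_set hsub2)]
      ring
    -- congruence on Ioc 0 m : replace F by F'
    have hpn := point_null t Vc hVc_cont μc hμc m hmt
    have hcongr1 : signedIntegral μc (Set.Ioc 0 m) (fun s => deriv f (Wfun Vc Δ F s))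
        = signedIntegral μc (Set.Ioc 0 m) (fun s => deriv f (Wfun Vc Δ F' s)) := by
      have key : ∀ (ρ : Measure ℝ), ρ {m} = 0 →
          ∫ s in Set.Ioc (0:ℝ) m, deriv f (Wfun Vc Δ F s) ∂ρ
            = ∫ s in Set.Ioc (0:ℝ) m, deriv f (Wfun Vc Δ F' s) ∂ρ := by
        intro ρ hρm
        refine integral_congr_ae ?_
        have hae : ∀ᵐ s ∂(ρ.restrict (Set.Ioc (0:ℝ) m)), s ≠ m := by
          rw [ae_iff]
          have hsub : {s : ℝ | ¬ s ≠ m} ⊆ {m} := by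
            intro s hs
            simp only [not_not, Set.mem_setOf_eq] at hs
            simp [hs]
          have hres : (ρ.restrict (Set.Ioc (0:ℝ) m)) {m} = 0 := by
            rw [Measure.restrict_apply (MeasurableSet.singleton m)]
            exact measure_mono_null Set.inter_subset_left hρm
          exact measure_mono_null hsub hres
        filter_upwards [hae, ae_restrict_mem measurableSet_Ioc] with s hsm hsmem
        have : s < m := lt_of_le_of_ne hsmem.2 hsm
        rw [k3 s this]
      rw [signedIntegral, signedIntegral, key P hpn.1, key N hpn.2]
    -- lemA on [m, b]
    set CC := ∑ u ∈ F, Δ u with hCCdef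
    have hcongr2 : signedIntegral μc (Set.Ioc m b) (fun s => deriv f (Wfun Vc Δ F s))
        = signedIntegral μc (Set.Ioc m b) (fun s => deriv f (Vc s + CC)) := by
      simp only [signedIntegral]
      rw [setIntegral_congr_fun measurableSet_Ioc (g := fun s => deriv f (Vc s + CC))
          (fun s hs => by rw [k4 s hs.1.le]),
        setIntegral_congr_fun (μ := N) measurableSet_Ioc (g := fun s => deriv f (Vc s + CC))
          (fun s hs => by rw [k4 s hs.1.le])]
    have hA := lemA t Vc hVc_cont μc hμc f hf CC m b hm.1.le hm.2 hbt
    -- jump sums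
    have hjump : ∑ u ∈ F, (f (Wfun Vc Δ F u) - f (Wfun Vc Δ F u - Δ u))
        = (f (Wfun Vc Δ F m) - f (Wfun Vc Δ F m - Δ m))
          + ∑ u ∈ F', (f (Wfun Vc Δ F' u) - f (Wfun Vc Δ F' u - Δ u)) := by
      rw [← Finset.add_sum_erase F _ hmF]
      congr 1
      refine Finset.sum_congr rfl fun u hu => ?_
      have : u < m := lt_of_le_of_ne (F.le_max' u (hF'sub hu)) (Finset.mem_erase.1 hu).1
      rw [k3 u this]
    -- final algebra
    have hWb : Wfun Vc Δ F b = Vc b + CC := k4 b hm.2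
    have hWm : Wfun Vc Δ F m = Vc m + CC := k4 m le_rfl
    rw [hsplit, hcongr1, hcongr2, hjump, k5, hWb, hWm]
    linarith [IH, hA]

theorem Wfun_aemeas' (Vc Δ : ℝ → ℝ) (hVc_cont : ContinuousOn Vc (Set.Ici 0))
    (F : Finset ℝ) (A : Set ℝ) (hA : MeasurableSet A) (hA0 : A ⊆ Set.Ici 0)
    (ρ : Measure ℝ) : AEMeasurable (Wfun Vc Δ F) (ρ.restrict A) := by
  have hstep : Measurable (fun s : ℝ => ∑ v ∈ F.filter (fun v => v ≤ s), Δ v) := by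
    have : (fun s : ℝ => ∑ v ∈ F.filter (fun v => v ≤ s), Δ v)
        = fun s : ℝ => ∑ v ∈ F, if v ≤ s then Δ v else 0 := by
      funext s
      rw [Finset.sum_filter]
    rw [this]
    refine Finset.measurable_sum F fun v _ => ?_
    exact Measurable.ite (measurableSet_Ici (a := v)) measurable_const measurable_const
  exact AEMeasurable.add ((hVc_cont.mono hA0).aemeasurable hA) hstep.aemeasurable

theorem lipschitz_on (f : ℝ → ℝ) (hf : ContDiff ℝ 1 f) (R M : ℝ)
    (hM : ∀ y ∈ Icc (-R) R, |deriv f y| ≤ M) :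
    ∀ x ∈ Icc (-R) R, ∀ y ∈ Icc (-R) R, |f y - f x| ≤ M * |y - x| := by
  intro x hx y hy
  obtain ⟨ξ, hξmem, hξeq⟩ := mvt_helper f hf x y
  have hξ : ξ ∈ Icc (-R) R := by
    obtain ⟨h1, h2⟩ := hξmem
    constructor
    · exact le_trans (le_min hx.1 hy.1) h1
    · exact le_trans h2 (max_le hx.2 hy.2)
  rw [hξeq, abs_mul]
  exact mul_le_mul_of_nonneg_right (hM ξ hξ) (abs_nonneg _)

theorem tsum_notMem_congr (h : ℝ → ℝ) (F G : Finset ℝ) (hFG : F ⊆ G)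
    (hz : ∀ u ∈ G, u ∉ F → h u = 0) :
    ∑' u : {x : ℝ // x ∉ F}, h u.1 = ∑' u : {x : ℝ // x ∉ G}, h u.1 := by
  have e1 : ∑' u : {x : ℝ // x ∉ F}, h u.1 = ∑' x : ℝ, Set.indicator {x : ℝ | x ∉ F} h x :=
    tsum_subtype _ _
  have e2 : ∑' u : {x : ℝ // x ∉ G}, h u.1 = ∑' x : ℝ, Set.indicator {x : ℝ | x ∉ G} h x :=
    tsum_subtype _ _
  rw [e1, e2]
  refine tsum_congr fun u => ?_
  by_cases hG : u ∈ G
  · by_cases hF : u ∈ F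
    · rw [Set.indicator_of_notMem (by simpa using hF), Set.indicator_of_notMem (by simpa using hG)]
    · rw [Set.indicator_of_mem (by simpa using hF), Set.indicator_of_notMem (by simpa using hG),
        hz u hG hF]
  · have hF : u ∉ F := fun hc => hG (hFG hc)
    rw [Set.indicator_of_mem (by simpa using hF), Set.indicator_of_mem (by simpa using hG)]

theorem jump_diff_bound (f : ℝ → ℝ) (hf : ContDiff ℝ 1 f) (R δ ε' : ℝ)
    (hδ : ∀ p ∈ Icc (-R) R, ∀ q ∈ Icc (-R) R, dist p q < δ → dist (deriv f p) (deriv f q) < ε')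
    (x y d : ℝ) (hx : x ∈ Icc (-R) R) (hxd : x - d ∈ Icc (-R) R)
    (hy : y ∈ Icc (-R) R) (hyd : y - d ∈ Icc (-R) R)
    (hxy : |x - y| < δ) :
    |(f x - f (x - d)) - (f y - f (y - d))| ≤ ε' * |d| := by
  set u : ℝ → ℝ := fun e => (f x - f (x - e)) - (f y - f (y - e)) with hu
  have hu_cd : ContDiff ℝ 1 u := by
    have h1 : ContDiff ℝ 1 (fun e : ℝ => f (x - e)) := hf.comp (contDiff_const.sub contDiff_id)
    have h2 : ContDiff ℝ 1 (fun e : ℝ => f (y - e)) := hf.comp (contDiff_const.sub contDiff_id)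
    exact (contDiff_const.sub h1).sub (contDiff_const.sub h2)
  obtain ⟨ζ, hζmem, hζeq⟩ := mvt_helper u hu_cd 0 d
  have hu0 : u 0 = 0 := by simp [hu]
  have hderiv : HasDerivAt u (deriv f (x - ζ) - deriv f (y - ζ)) ζ := by
    have hdf : Differentiable ℝ f := hf.differentiable one_ne_zero
    have h1 : HasDerivAt (fun e : ℝ => x - e) (-1) ζ := (hasDerivAt_id ζ).const_sub x
    have h2 : HasDerivAt (fun e : ℝ => y - e) (-1) ζ := (hasDerivAt_id ζ).const_sub y
    have hdx : HasDerivAt (fun e : ℝ => f (x - e)) (deriv f (x - ζ) * (-1)) ζ :=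
      (hdf (x - ζ)).hasDerivAt.comp ζ h1
    have hdy : HasDerivAt (fun e : ℝ => f (y - e)) (deriv f (y - ζ) * (-1)) ζ :=
      (hdf (y - ζ)).hasDerivAt.comp ζ h2
    have := ((hasDerivAt_const ζ (f x)).sub hdx).sub ((hasDerivAt_const ζ (f y)).sub hdy)
    refine this.congr_deriv ?_
    ring
  have hderiv' : deriv u ζ = deriv f (x - ζ) - deriv f (y - ζ) := hderiv.deriv
  have hxz : x - ζ ∈ Icc (-R) R := by
    obtain ⟨h1, h2⟩ := hζmem
    constructor
    · rcases max_cases (0:ℝ) d with ⟨he, _⟩ | ⟨he, _⟩ <;> rw [he] at h2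
      · linarith [hx.1]
      · linarith [hxd.1]
    · rcases min_cases (0:ℝ) d with ⟨he, _⟩ | ⟨he, _⟩ <;> rw [he] at h1
      · linarith [hx.2]
      · linarith [hxd.2]
  have hyz : y - ζ ∈ Icc (-R) R := by
    obtain ⟨h1, h2⟩ := hζmem
    constructor
    · rcases max_cases (0:ℝ) d with ⟨he, _⟩ | ⟨he, _⟩ <;> rw [he] at h2
      · linarith [hy.1]
      · linarith [hyd.1]
    · rcases min_cases (0:ℝ) d with ⟨he, _⟩ | ⟨he, _⟩ <;> rw [he] at h1
      · linarith [hy.2]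
      · linarith [hyd.2]
  have hdist : dist (x - ζ) (y - ζ) < δ := by
    rw [Real.dist_eq]
    have : x - ζ - (y - ζ) = x - y := by ring
    rw [this]
    exact hxy
  have hub := hδ _ hxz _ hyz hdist
  rw [Real.dist_eq, hderiv'.symm] at hub
  have hfinal : |(f x - f (x - d)) - (f y - f (y - d))| = |deriv u ζ| * |d| := by
    have : (f x - f (x - d)) - (f y - f (y - d)) = u d := rfl
    rw [this]
    have h2 : u d = deriv u ζ * d := by
      have := hζeq
      rw [hu0] at this
      simpa using this
    rw [h2, abs_mul]
  rw [hfinal]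
  exact mul_le_mul_of_nonneg_right hub.le (abs_nonneg _)

set_option maxHeartbeats 1600000 in
/-- first change-of-variables formula. Let `V` be càdlàg on `[0,∞)` with
finite variation on compacts and canonical decomposition `V = Vc + Vd`, let `μc` be the
signed Stieltjes measure of the continuous part `Vc` on `[0,t]`, and let `f` be of class
`C¹`. Then for every `t > 0`,
`f(V t) − f(V 0) = ∫_0^t f'(V s) μc(ds) + Σ_{0<s≤t} (f(V s) − f(V s−))`,
the sum being absolutely convergent. -/
theorem change_of_variables_stieltjes
    (V Vm Vc Vd : ℝ → ℝ)
    (hV_rc : ∀ s ∈ Set.Ici (0 : ℝ), ContinuousWithinAt V (Set.Ici s) s)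
    (hV_ll : ∀ s ∈ Set.Ioi (0 : ℝ),
      Filter.Tendsto V (nhdsWithin s (Set.Iio s)) (nhds (Vm s)))
    (hV_bv : ∀ T : ℝ, BoundedVariationOn V (Set.Icc 0 T))
    (hdecomp : ∀ s ∈ Set.Ici (0 : ℝ), V s = Vc s + Vd s)
    (hVc_cont : ContinuousOn Vc (Set.Ici 0))
    (hVc_bv : ∀ T : ℝ, BoundedVariationOn Vc (Set.Icc 0 T))
    (hVd_sum : ∀ s ∈ Set.Ici (0 : ℝ),
      HasSum (fun u : Set.Ioc (0 : ℝ) s => V u.1 - Vm u.1) (Vd s))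
    (hVd_abs : ∀ s ∈ Set.Ici (0 : ℝ),
      Summable (fun u : Set.Ioc (0 : ℝ) s => |V u.1 - Vm u.1|))
    (t : ℝ) (ht : 0 < t)
    (μc : MeasureTheory.SignedMeasure ℝ)
    (hμc : ∀ a b : ℝ, 0 ≤ a → a ≤ b → b ≤ t → μc (Set.Ioc a b) = Vc b - Vc a)
    (f : ℝ → ℝ) (hf : ContDiff ℝ 1 f) :
    Summable (fun s : Set.Ioc (0 : ℝ) t => |f (V s.1) - f (Vm s.1)|) ∧
      f (V t) - f (V 0) =
        signedIntegral μc (Set.Ioc 0 t) (fun s => deriv f (V s)) +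
          ∑' s : Set.Ioc (0 : ℝ) t, (f (V s.1) - f (Vm s.1)) := by
  set P := μc.toJordanDecomposition.posPart with hPdef
  set N := μc.toJordanDecomposition.negPart with hNdef
  have hf' : Continuous (deriv f) := hf.continuous_deriv le_rfl
  set Δ : ℝ → ℝ := fun u => V u - Vm u with hΔdef
  set D : ℝ → ℝ := (Set.Ioc (0:ℝ) t).indicator Δ with hDdef
  have htI : (t:ℝ) ∈ Set.Ici (0:ℝ) := ht.le
  have hsubt : Summable (fun u : Set.Ioc (0:ℝ) t => |Δ u.1|) := hVd_abs t htI
  have hDabs : Summable (fun u : ℝ => |D u|) := by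
    have h1 : Summable ((Set.Ioc (0:ℝ) t).indicator (fun u => |Δ u|)) :=
      summable_subtype_iff_indicator.1 hsubt
    have h2 : (Set.Ioc (0:ℝ) t).indicator (fun u => |Δ u|) = fun u => |D u| := by
      funext u
      by_cases hu : u ∈ Set.Ioc (0:ℝ) t
      · rw [Set.indicator_of_mem hu, hDdef, Set.indicator_of_mem hu]
      · rw [Set.indicator_of_notMem hu, hDdef, Set.indicator_of_notMem hu, abs_zero]
    rwa [h2] at h1
  set Dtot := ∑' u : ℝ, |D u| with hDtotdef
  have hDtot0 : 0 ≤ Dtot := tsum_nonneg (fun _ => abs_nonneg _)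
  have hDle : ∀ u, |D u| ≤ Dtot := fun u => Summable.le_tsum hDabs u (fun i _ => abs_nonneg _)
  -- bounds on V, Vm
  have hvar : BoundedVariationOn V (Set.Icc 0 t) := hV_bv t
  set RV := |V 0| + (eVariationOn V (Set.Icc 0 t)).toReal with hRVdef
  have hVbound : ∀ s ∈ Set.Icc (0:ℝ) t, |V s| ≤ RV := by
    intro s hs
    have h0 : (0:ℝ) ∈ Set.Icc (0:ℝ) t := ⟨le_rfl, ht.le⟩
    have h1 : |V s - V 0| ≤ (eVariationOn V (Set.Icc 0 t)).toReal := by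
      have h2' := eVariationOn.edist_le V hs h0
      rw [edist_dist] at h2'
      have h2 : ENNReal.ofReal (dist (V s) (V 0)) ≤ eVariationOn V (Set.Icc 0 t) := h2'
      rw [Real.dist_eq] at h2
      exact (ENNReal.ofReal_le_iff_le_toReal hvar).1 h2
    calc |V s| = |V 0 + (V s - V 0)| := by ring_nf
      _ ≤ |V 0| + |V s - V 0| := abs_add_le _ _
      _ ≤ RV := by rw [hRVdef]; linarith
  have hVmbound : ∀ s ∈ Set.Ioc (0:ℝ) t, |Vm s| ≤ RV := by
    intro s hs
    have hlim := hV_ll s hs.1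
    have habs : Tendsto (fun r => |V r|) (nhdsWithin s (Set.Iio s)) (nhds |Vm s|) :=
      (continuous_abs.tendsto _).comp hlim
    haveI : (nhdsWithin s (Set.Iio s)).NeBot := nhdsLT_neBot s
    refine le_of_tendsto habs ?_
    have hev : ∀ᶠ r in nhdsWithin s (Set.Iio s), r ∈ Set.Icc (0:ℝ) t := by
      have h1 : Set.Ioi (0:ℝ) ∈ nhdsWithin s (Set.Iio s) :=
        nhdsWithin_le_nhds (Ioi_mem_nhds hs.1)
      filter_upwards [h1, self_mem_nhdsWithin] with r hr1 hr2
      exact ⟨le_of_lt hr1, le_trans (le_of_lt hr2) hs.2⟩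
    filter_upwards [hev] with r hr
    exact hVbound r hr
  have hRV0 : 0 ≤ RV := le_trans (abs_nonneg _) (hVbound 0 ⟨le_rfl, ht.le⟩)
  set R := RV + 2 * Dtot + 1 with hRdef
  have hRVR : RV ≤ R := by rw [hRdef]; linarith
  have hR0 : 0 < R := by rw [hRdef]; linarith
  obtain ⟨M, hM⟩ : ∃ M, ∀ y ∈ Set.Icc (-R) R, |deriv f y| ≤ M := by
    obtain ⟨M, hM⟩ := isCompact_Icc.exists_bound_of_continuousOn
      (hf'.continuousOn (s := Set.Icc (-R) R))
    exact ⟨M, fun y hy => hM y hy⟩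
  have hM0 : 0 ≤ M := le_trans (abs_nonneg _) (hM 0 ⟨by linarith, hR0.le⟩)
  have hlip := lipschitz_on f hf R M hM
  have hVmem : ∀ s ∈ Set.Icc (0:ℝ) t, V s ∈ Set.Icc (-R) R :=
    fun s hs => abs_le.1 ((hVbound s hs).trans hRVR)
  have hVmmem : ∀ s ∈ Set.Ioc (0:ℝ) t, Vm s ∈ Set.Icc (-R) R :=
    fun s hs => abs_le.1 ((hVmbound s hs).trans hRVR)
  -- Part 1
  have hpart1 : Summable (fun s : Set.Ioc (0 : ℝ) t => |f (V s.1) - f (Vm s.1)|) := by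
    refine Summable.of_nonneg_of_le (fun _ => abs_nonneg _) ?_ (hsubt.mul_left M)
    intro u
    exact hlip _ (hVmmem u.1 u.2) _ (hVmem u.1 ⟨u.2.1.le, u.2.2⟩)
  refine ⟨hpart1, ?_⟩
  -- jump sum function over ℝ
  set A : ℝ → ℝ := (Set.Ioc (0:ℝ) t).indicator (fun u => f (V u) - f (Vm u)) with hAdef
  have hAsum : Summable A := by
    have h1 : Summable (fun u : Set.Ioc (0:ℝ) t => f (V u.1) - f (Vm u.1)) := hpart1.of_abs
    exact summable_subtype_iff_indicator.1 h1
  set S := ∑' s : Set.Ioc (0:ℝ) t, (f (V s.1) - f (Vm s.1)) with hSdef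
  have hAS : ∑' u : ℝ, A u = S := by rw [hAdef, hSdef, ← tsum_subtype]
  have hAbound : ∀ u : ℝ, |A u| ≤ M * |D u| := by
    intro u
    by_cases hu : u ∈ Set.Ioc (0:ℝ) t
    · rw [hAdef, Set.indicator_of_mem hu, hDdef, Set.indicator_of_mem hu]
      exact hlip _ (hVmmem u hu) _ (hVmem u ⟨hu.1.le, hu.2⟩)
    · rw [hAdef, Set.indicator_of_notMem hu, hDdef, Set.indicator_of_notMem hu]
      simp
  -- choose the finite jump sets
  have htail := tendsto_tsum_compl_atTop_zero (fun u : ℝ => |D u|)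
  have hex : ∀ n : ℕ, ∃ Gn : Finset ℝ, ∑' u : {x : ℝ // x ∉ Gn}, |D u.1| < 1/(n+1) := by
    intro n
    exact ((tendsto_order.1 htail).2 (1/(n+1)) (by positivity)).exists
  choose G hG using hex
  set Fn : ℕ → Finset ℝ := fun n => (G n).filter (fun u => 0 < u ∧ u ≤ t) with hFndef
  have hFnmem : ∀ n, ∀ u ∈ Fn n, u ∈ Set.Ioc (0:ℝ) t := by
    intro n u hu
    have := (Finset.mem_filter.1 hu).2
    exact ⟨this.1, this.2⟩
  set ε : ℕ → ℝ := fun n => ∑' u : {x : ℝ // x ∉ Fn n}, |D u.1| with hεdef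
  have hε0 : ∀ n, 0 ≤ ε n := fun n => tsum_nonneg (fun _ => abs_nonneg _)
  have hεeq : ∀ n, ε n = ∑' u : {x : ℝ // x ∉ G n}, |D u.1| := by
    intro n
    have hsub : Fn n ⊆ G n := by rw [hFndef]; exact Finset.filter_subset _ _
    refine tsum_notMem_congr (fun u => |D u|) (Fn n) (G n) hsub ?_
    intro u huG huF
    have hnm : u ∉ Set.Ioc (0:ℝ) t := by
      intro hc
      exact huF (Finset.mem_filter.2 ⟨huG, hc.1, hc.2⟩)
    show |D u| = 0
    rw [hDdef, Set.indicator_of_notMem hnm, abs_zero]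
  have hεlt : ∀ n, ε n < 1/(n+1) := fun n => (hεeq n) ▸ hG n
  have hεlim : Tendsto ε atTop (𝓝 0) :=
    squeeze_zero hε0 (fun n => (hεlt n).le) tendsto_one_div_add_atTop_nhds_zero_nat
  have hεle : ∀ n, ε n ≤ Dtot := by
    intro n
    exact Summable.tsum_le_tsum_of_inj (Subtype.val) Subtype.val_injective
      (fun c _ => abs_nonneg _) (fun b => le_rfl) (hDabs.subtype _) hDabs
  set W : ℕ → ℝ → ℝ := fun n s => Wfun Vc D (Fn n) s with hWdef
  -- closeness of W n to V
  have hclose : ∀ n, ∀ s ∈ Set.Icc (0:ℝ) t, |W n s - V s| ≤ ε n := by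
    intro n s hs
    have hVs := hdecomp s hs.1
    have hsum1 : HasSum ((Set.Ioc (0:ℝ) s).indicator Δ) (Vd s) :=
      hasSum_subtype_iff_indicator.1 (hVd_sum s hs.1)
    have hind : (Set.Ioc (0:ℝ) s).indicator Δ = (Set.Ioc (0:ℝ) s).indicator D := by
      refine Set.indicator_congr fun u hu => ?_
      rw [hDdef, Set.indicator_of_mem (Set.mem_Ioc.2 ⟨hu.1, hu.2.trans hs.2⟩)]
    rw [hind] at hsum1
    set hb : ℝ → ℝ := (Set.Ioc (0:ℝ) s).indicator D with hbdef
    have hsummable : Summable hb := hsum1.summable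
    set F' := (Fn n).filter (fun v => v ≤ s) with hF'def
    have hkey := Summable.sum_add_tsum_subtype_compl hsummable F'
    have htsum_eq : ∑' u, hb u = Vd s := hsum1.tsum_eq
    have hsumF' : ∑ u ∈ F', hb u = ∑ u ∈ F', D u := by
      refine Finset.sum_congr rfl fun u hu => ?_
      have h1 := Finset.mem_filter.1 hu
      have h2 := hFnmem n u h1.1
      exact Set.indicator_of_mem (Set.mem_Ioc.2 ⟨h2.1, h1.2⟩) D
    have hWs : W n s - V s = -(∑' u : {x : ℝ // x ∉ F'}, hb u.1) := by
      have e1 : W n s = Vc s + ∑ v ∈ F', D v := rfl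
      rw [e1, hVs, ← htsum_eq, ← hkey, hsumF']
      ring
    rw [hWs, abs_neg]
    have habs_le : ∀ (T : Set ℝ) (u : T), |hb u.1| ≤ |D u.1| := by
      intro T u
      by_cases hu : u.1 ∈ Set.Ioc (0:ℝ) s
      · rw [hbdef, Set.indicator_of_mem hu]
      · rw [hbdef, Set.indicator_of_notMem hu, abs_zero]
        exact abs_nonneg _
    have hsummable_abs : ∀ (T : Set ℝ), Summable (fun u : T => |hb u.1|) := fun T =>
      Summable.of_nonneg_of_le (fun _ => abs_nonneg _) (habs_le T) (hDabs.subtype _)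
    have hsubF' : F' ⊆ Fn n := by rw [hF'def]; exact Finset.filter_subset _ _
    calc |∑' u : {x : ℝ // x ∉ F'}, hb u.1|
        ≤ ∑' u : {x : ℝ // x ∉ F'}, |hb u.1| := by
          rw [← Real.norm_eq_abs]
          refine le_trans (norm_tsum_le_tsum_norm
            (by
              have hS : Summable (fun u : {x : ℝ // x ∉ F'} => |hb u.1|) :=
                hsummable_abs {x : ℝ | x ∉ F'}
              simpa [Real.norm_eq_abs] using hS)) ?_
          simp [Real.norm_eq_abs]
      _ = ∑' u : {x : ℝ // x ∉ Fn n}, |hb u.1| := by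
          refine tsum_notMem_congr (fun u => |hb u|) F' (Fn n) hsubF' ?_
          intro u huFn huF'
          have hns : ¬ u ≤ s := fun hc => huF' (by rw [hF'def]; exact Finset.mem_filter.2 ⟨huFn, hc⟩)
          show |hb u| = 0
          rw [hbdef, Set.indicator_of_notMem (fun hc => hns hc.2), abs_zero]
      _ ≤ ε n := Summable.tsum_le_tsum (habs_le _) (hsummable_abs _) (hDabs.subtype _)
  have hWlim : ∀ s ∈ Set.Icc (0:ℝ) t, Tendsto (fun n => W n s) atTop (𝓝 (V s)) := by
    intro s hs
    have h0 : Tendsto (fun n => W n s - V s) atTop (𝓝 0) :=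
      squeeze_zero_norm (fun n => by simpa [Real.norm_eq_abs] using hclose n s hs) hεlim
    have := h0.add (tendsto_const_nhds (x := V s))
    simpa using this
  -- V 0 = Vc 0
  have hV0 : V 0 = Vc 0 := by
    have h0 := hdecomp 0 Set.self_mem_Ici
    have hVd0 : Vd 0 = 0 := by
      haveI : IsEmpty (Set.Ioc (0:ℝ) (0:ℝ)) := by
        rw [Set.Ioc_self]
        exact Set.isEmpty_coe_sort.2 rfl
      exact (hVd_sum 0 Set.self_mem_Ici).unique hasSum_empty
    rw [hVd0] at h0
    linarith
  -- apply lemB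
  have heqn : ∀ n, f (W n t) - f (Vc 0)
      = signedIntegral μc (Set.Ioc 0 t) (fun s => deriv f (W n s))
        + ∑ u ∈ Fn n, (f (W n u) - f (W n u - D u)) :=
    fun n => lemB t Vc hVc_cont μc hμc f hf D (Fn n) t (hFnmem n) ht.le le_rfl
  -- membership of W values
  have hWmem : ∀ n, ∀ s ∈ Set.Icc (0:ℝ) t, W n s ∈ Set.Icc (-R) R := by
    intro n s hs
    have h1 := abs_le.1 (hclose n s hs)
    have h2 := abs_le.1 (hVbound s hs)
    have h3 := hεle n
    constructor
    · rw [hRdef]; linarith [h1.1, h2.1]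
    · rw [hRdef]; linarith [h1.2, h2.2]
  have hWdmem : ∀ n, ∀ u ∈ Fn n, W n u - D u ∈ Set.Icc (-R) R := by
    intro n u hu
    have huI := hFnmem n u hu
    have hDu : D u = Δ u := Set.indicator_of_mem huI Δ
    have h1 := abs_le.1 (hclose n u ⟨huI.1.le, huI.2⟩)
    have h2 := abs_le.1 (hVmbound u huI)
    have h3 := hεle n
    have he : W n u - D u = Vm u + (W n u - V u) := by
      rw [hDu, hΔdef]; ring
    rw [he]
    constructor
    · rw [hRdef]; linarith [h1.1, h2.1]
    · rw [hRdef]; linarith [h1.2, h2.2]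
  -- integrability of limit integrand
  have hVae : ∀ (ρ : Measure ℝ), AEMeasurable V (ρ.restrict (Set.Ioc 0 t)) := by
    intro ρ
    refine aemeasurable_of_tendsto_metrizable_ae atTop
      (fun n => Wfun_aemeas' Vc D hVc_cont (Fn n) _ measurableSet_Ioc (fun s hs => hs.1.le) ρ) ?_
    filter_upwards [ae_restrict_mem measurableSet_Ioc] with s hsmem
    exact hWlim s ⟨hsmem.1.le, hsmem.2⟩
  have hintV : ∀ (ρ : Measure ℝ) [IsFiniteMeasure ρ],
      IntegrableOn (fun s => deriv f (V s)) (Set.Ioc 0 t) ρ := by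
    intro ρ _
    refine Integrable.mono' (integrable_const M)
      ((hf'.measurable.comp_aemeasurable (hVae ρ)).aestronglyMeasurable) ?_
    refine (ae_restrict_iff' measurableSet_Ioc).2 (Eventually.of_forall fun s hs => ?_)
    have := hM _ (hVmem s ⟨hs.1.le, hs.2⟩)
    simpa [Real.norm_eq_abs] using this
  have hintW : ∀ n (ρ : Measure ℝ) [IsFiniteMeasure ρ],
      IntegrableOn (fun s => deriv f (W n s)) (Set.Ioc 0 t) ρ :=
    fun n ρ _ => Wfun_integrableOn t Vc D hVc_cont (Fn n) t ht.le le_rfl f hf ρ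
  -- convergence of the integrals
  set c0 := (P (Set.Ioc 0 t)).toReal + (N (Set.Ioc 0 t)).toReal with hc0def
  have hc00 : 0 ≤ c0 := by positivity
  have hIlim : Tendsto (fun n => signedIntegral μc (Set.Ioc 0 t) (fun s => deriv f (W n s)))
      atTop (𝓝 (signedIntegral μc (Set.Ioc 0 t) (fun s => deriv f (V s)))) := by
    rw [Metric.tendsto_atTop]
    intro εg hεg
    have hucf : UniformContinuousOn (deriv f) (Set.Icc (-R) R) :=
      isCompact_Icc.uniformContinuousOn_of_continuous hf'.continuousOn
    rw [Metric.uniformContinuousOn_iff] at hucf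
    set ε' := εg / (c0 + 1) with hε'def
    have hε'pos : 0 < ε' := by positivity
    obtain ⟨δ, hδpos, hδ⟩ := hucf ε' hε'pos
    obtain ⟨n0, hn0⟩ := eventually_atTop.1 ((tendsto_order.1 hεlim).2 δ hδpos)
    refine ⟨n0, fun n hn => ?_⟩
    have hεn := hn0 n hn
    have hpw : ∀ s ∈ Set.Ioc (0:ℝ) t, ‖deriv f (W n s) - deriv f (V s)‖ ≤ ε' := by
      intro s hs
      have h1 := hδ _ (hWmem n s ⟨hs.1.le, hs.2⟩) _ (hVmem s ⟨hs.1.le, hs.2⟩)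
        (by rw [Real.dist_eq]; exact lt_of_le_of_lt (hclose n s ⟨hs.1.le, hs.2⟩) hεn)
      rw [Real.dist_eq] at h1
      simpa [Real.norm_eq_abs] using h1.le
    have hb : ∀ (ρ : Measure ℝ) [IsFiniteMeasure ρ],
        IntegrableOn (fun s => deriv f (W n s)) (Set.Ioc 0 t) ρ →
        IntegrableOn (fun s => deriv f (V s)) (Set.Ioc 0 t) ρ →
        |(∫ s in Set.Ioc (0:ℝ) t, deriv f (W n s) ∂ρ) - ∫ s in Set.Ioc (0:ℝ) t, deriv f (V s) ∂ρ|
          ≤ ε' * (ρ (Set.Ioc (0:ℝ) t)).toReal := by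
      intro ρ _ hi1 hi2
      rw [← integral_sub hi1 hi2, ← Real.norm_eq_abs]
      exact norm_setIntegral_le_of_norm_le_const (measure_lt_top _ _) hpw
    have hPb := hb P (hintW n P) (hintV P)
    have hNb := hb N (hintW n N) (hintV N)
    rw [Real.dist_eq]
    simp only [signedIntegral]
    have hfinal : ε' * c0 < εg := by
      have h1 : ε' * (c0 + 1) = εg := div_mul_cancel₀ εg (by positivity)
      nlinarith [hε'pos]
    calc |(∫ s in Set.Ioc (0:ℝ) t, deriv f (W n s) ∂P) - (∫ s in Set.Ioc (0:ℝ) t, deriv f (W n s) ∂N)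
          - ((∫ s in Set.Ioc (0:ℝ) t, deriv f (V s) ∂P) - (∫ s in Set.Ioc (0:ℝ) t, deriv f (V s) ∂N))|
        = |((∫ s in Set.Ioc (0:ℝ) t, deriv f (W n s) ∂P) - ∫ s in Set.Ioc (0:ℝ) t, deriv f (V s) ∂P)
          - ((∫ s in Set.Ioc (0:ℝ) t, deriv f (W n s) ∂N) - ∫ s in Set.Ioc (0:ℝ) t, deriv f (V s) ∂N)| := by
          ring_nf
      _ ≤ |(∫ s in Set.Ioc (0:ℝ) t, deriv f (W n s) ∂P) - ∫ s in Set.Ioc (0:ℝ) t, deriv f (V s) ∂P|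
          + |(∫ s in Set.Ioc (0:ℝ) t, deriv f (W n s) ∂N) - ∫ s in Set.Ioc (0:ℝ) t, deriv f (V s) ∂N| :=
          abs_sub _ _
      _ ≤ ε' * (P (Set.Ioc (0:ℝ) t)).toReal + ε' * (N (Set.Ioc (0:ℝ) t)).toReal := add_le_add hPb hNb
      _ = ε' * c0 := by rw [hc0def]; ring
      _ < εg := hfinal
  -- convergence of the jump sums
  have hSlim : Tendsto (fun n => ∑ u ∈ Fn n, (f (W n u) - f (W n u - D u))) atTop (𝓝 S) := by
    rw [Metric.tendsto_atTop]
    intro εg hεg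
    have hucf : UniformContinuousOn (deriv f) (Set.Icc (-R) R) :=
      isCompact_Icc.uniformContinuousOn_of_continuous hf'.continuousOn
    rw [Metric.uniformContinuousOn_iff] at hucf
    set ε' := εg / (2 * (Dtot + 1)) with hε'def
    have hε'pos : 0 < ε' := by positivity
    obtain ⟨δ, hδpos, hδ⟩ := hucf ε' hε'pos
    have hminpos : 0 < min δ (εg / (2 * (M + 1))) := lt_min hδpos (by positivity)
    obtain ⟨n0, hn0⟩ := eventually_atTop.1 ((tendsto_order.1 hεlim).2 _ hminpos)
    refine ⟨n0, fun n hn => ?_⟩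
    have hεn := hn0 n hn
    have hεnδ : ε n < δ := lt_of_lt_of_le hεn (min_le_left _ _)
    have hεnM : ε n < εg / (2 * (M + 1)) := lt_of_lt_of_le hεn (min_le_right _ _)
    have hterm : ∀ u ∈ Fn n, |(f (W n u) - f (W n u - D u)) - A u| ≤ ε' * |D u| := by
      intro u hu
      have huI := hFnmem n u hu
      have hDu : D u = Δ u := Set.indicator_of_mem huI Δ
      have hAu : A u = f (V u) - f (Vm u) := Set.indicator_of_mem huI _
      have hVmu : Vm u = V u - D u := by rw [hDu, hΔdef]; ring
      rw [hAu, hVmu]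
      exact jump_diff_bound f hf R δ ε' hδ (W n u) (V u) (D u)
        (hWmem n u ⟨huI.1.le, huI.2⟩) (hWdmem n u hu)
        (hVmem u ⟨huI.1.le, huI.2⟩) (by rw [← hVmu]; exact hVmmem u huI)
        (lt_of_le_of_lt (hclose n u ⟨huI.1.le, huI.2⟩) hεnδ)
    have h1 : |∑ u ∈ Fn n, (f (W n u) - f (W n u - D u)) - ∑ u ∈ Fn n, A u| ≤ ε' * Dtot := by
      rw [← Finset.sum_sub_distrib]
      refine le_trans (Finset.abs_sum_le_sum_abs _ _) ?_
      refine le_trans (Finset.sum_le_sum hterm) ?_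
      rw [← Finset.mul_sum]
      refine mul_le_mul_of_nonneg_left ?_ hε'pos.le
      exact Summable.sum_le_tsum (Fn n) (fun i _ => abs_nonneg _) hDabs
    have h2 : |∑ u ∈ Fn n, A u - S| ≤ M * ε n := by
      rw [← hAS]
      have hcompl := Summable.sum_add_tsum_subtype_compl hAsum (Fn n)
      have e : ∑ u ∈ Fn n, A u - ∑' u, A u = -(∑' u : {x : ℝ // x ∉ Fn n}, A u.1) := by
        linarith [hcompl]
      rw [e, abs_neg]
      have hsum1 : Summable (fun u : {x : ℝ // x ∉ Fn n} => |A u.1|) :=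
        Summable.of_nonneg_of_le (fun _ => abs_nonneg _) (fun u => hAbound u.1)
          ((hDabs.mul_left M).subtype _)
      calc |∑' u : {x : ℝ // x ∉ Fn n}, A u.1|
          ≤ ∑' u : {x : ℝ // x ∉ Fn n}, |A u.1| := by
            rw [← Real.norm_eq_abs]
            refine le_trans (norm_tsum_le_tsum_norm (by simpa [Real.norm_eq_abs] using hsum1)) ?_
            simp [Real.norm_eq_abs]
        _ ≤ ∑' u : {x : ℝ // x ∉ Fn n}, M * |D u.1| :=
            Summable.tsum_le_tsum (fun u => hAbound u.1) hsum1 ((hDabs.mul_left M).subtype _)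
        _ = M * ε n := by rw [hεdef, ← tsum_mul_left]
    rw [Real.dist_eq]
    have hfin1 : ε' * Dtot < εg / 2 := by
      rw [hε'def, div_mul_eq_mul_div, div_lt_iff₀ (by positivity : (0:ℝ) < 2 * (Dtot + 1))]
      nlinarith [hεg, hDtot0]
    have hfin2 : M * ε n < εg / 2 := by
      have hle : M * ε n ≤ M * (εg / (2 * (M + 1))) :=
        mul_le_mul_of_nonneg_left hεnM.le hM0
      have hkey : M * (εg / (2 * (M + 1))) < εg / 2 := by
        rw [← mul_div_assoc, div_lt_div_iff₀ (by positivity : (0:ℝ) < 2 * (M + 1))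
          (by norm_num : (0:ℝ) < 2)]
        nlinarith [hεg, hM0]
      linarith
    calc |∑ u ∈ Fn n, (f (W n u) - f (W n u - D u)) - S|
        ≤ |∑ u ∈ Fn n, (f (W n u) - f (W n u - D u)) - ∑ u ∈ Fn n, A u| + |∑ u ∈ Fn n, A u - S| :=
          abs_sub_le _ _ _
      _ ≤ ε' * Dtot + M * ε n := add_le_add h1 h2
      _ < εg := by linarith
  -- conclusion
  have hLHS : Tendsto (fun n => f (W n t) - f (Vc 0)) atTop (𝓝 (f (V t) - f (V 0))) := by
    have hft : Tendsto (fun n => f (W n t)) atTop (𝓝 (f (V t))) :=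
      (hf.continuous.tendsto _).comp (hWlim t ⟨ht.le, le_rfl⟩)
    rw [hV0]
    exact hft.sub_const _
  have hRHS : Tendsto (fun n => f (W n t) - f (Vc 0)) atTop
      (𝓝 (signedIntegral μc (Set.Ioc 0 t) (fun s => deriv f (V s)) + S)) := by
    refine (hIlim.add hSlim).congr (fun n => (heqn n).symm)
  exact tendsto_nhds_unique hLHS hRHS
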